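/- Let ω = -1/2 + (√3/2)e₁ be a primitive cube root of unity in the complex subfield C = R + Re₁ of the quaternions H. Then the map γ₃ on the Cayley algebra C⊕ = H ⊕ He₄ defined by γ₃(m + ne₄) = m + (ωn)e₄ is an algebra automorphism of the Cayley algebra of order 3. -/

import Mathlib

open Quaternion

noncomputable section

/-- The Cayley algebra (octonions), realized as `ℍ ⊕ ℍe₄`. -/
abbrev Oct := ℍ[ℝ] × ℍ[ℝ]

/-- Octonion multiplication: `(a + be₄)(c + de₄) = (ac - d̄b) + (da + bc̄)e₄`. -/
def omul (x y : Oct) : Oct :=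
  (x.1 * y.1 - star y.2 * x.2, y.2 * x.1 + x.2 * star y.1)

/-- `ω = -1/2 + (√3/2)e₁`, a primitive cube root of unity in the complex subfield
`ℝ + ℝe₁` of the quaternions. -/
def ωq : ℍ[ℝ] := ⟨-1/2, Real.sqrt 3 / 2, 0, 0⟩

/-- `γ₃(m + ne₄) = m + (ωn)e₄`. -/
def γ₃ (x : Oct) : Oct := (x.1, ωq * x.2)

lemma sqrt3_sq : Real.sqrt 3 * Real.sqrt 3 = 3 :=
  Real.mul_self_sqrt (by norm_num)

lemma star_ωq_mul : star ωq * ωq = 1 := by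
  ext <;> simp [Quaternion.re_mul, Quaternion.imI_mul, Quaternion.imJ_mul, Quaternion.imK_mul] <;> simp [ωq, Quaternion.ext_iff] <;> nlinarith [sqrt3_sq]

lemma ωq_sq : ωq * ωq = star ωq := by
  ext <;> simp [Quaternion.re_mul, Quaternion.imI_mul, Quaternion.imJ_mul, Quaternion.imK_mul] <;> simp [ωq, Quaternion.ext_iff] <;> nlinarith [sqrt3_sq]

lemma ωq_mul_star : ωq * star ωq = 1 := by
  ext <;> simp [Quaternion.re_mul, Quaternion.imI_mul, Quaternion.imJ_mul, Quaternion.imK_mul] <;> simp [ωq, Quaternion.ext_iff] <;> nlinarith [sqrt3_sq]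

lemma ωq_cube : ωq * (ωq * ωq) = 1 := by rw [ωq_sq, ωq_mul_star]

/-- `γ₃` is an algebra automorphism of the Cayley algebra of order `3`. -/
theorem γ₃_is_automorphism_of_order_three :
    -- `γ₃` is multiplicative
    (∀ x y : Oct, γ₃ (omul x y) = omul (γ₃ x) (γ₃ y)) ∧
    -- `γ₃` is `ℝ`-linear
    (∀ x y : Oct, γ₃ (x + y) = γ₃ x + γ₃ y) ∧
    (∀ (r : ℝ) (x : Oct), γ₃ (r • x) = r • γ₃ x) ∧
    -- `γ₃` is bijective
    Function.Bijective γ₃ ∧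
    -- `γ₃` has order `3`
    (∀ x, γ₃ (γ₃ (γ₃ x)) = x) ∧ γ₃ ≠ id := by
  have hcube : ∀ x, γ₃ (γ₃ (γ₃ x)) = x := by
    intro x
    have : ωq * (ωq * (ωq * x.2)) = x.2 := by
      rw [← mul_assoc, ← mul_assoc, mul_assoc ωq ωq ωq, ωq_cube, one_mul]
    simp [γ₃, this]
  refine ⟨?_, ?_, ?_, ?_, hcube, ?_⟩
  · intro x y
    simp only [γ₃, omul, Prod.mk.injEq]
    constructor
    · rw [StarMul.star_mul, mul_assoc, ← mul_assoc (star ωq), star_ωq_mul, one_mul]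
    · rw [mul_add, ← mul_assoc, ← mul_assoc]
  · intro x y; simp [γ₃, mul_add, Prod.ext_iff]
  · intro r x; simp [γ₃, Prod.ext_iff, Quaternion.re_smul]
  · exact Function.bijective_iff_has_inverse.2 ⟨γ₃ ∘ γ₃, fun x => hcube x, fun x => hcube x⟩
  · intro h
    have := congrFun h (0, 1)
    simp only [γ₃, mul_one, id_eq, Prod.mk.injEq] at this
    have : ωq.re = (1 : ℍ[ℝ]).re := by rw [this.2]
    simp [ωq] at this
    norm_num at this
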